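/- Let n ≥ 2, u ∈ ℝ, ε ∈ ℝ, and let H be the boundary-symmetric Hubbard Hamiltonian on (ℂ²⊗ℂ²)^{⊗n}. Let J = {0,+,−,z}. Suppose Ω_n ∈ End((ℂ²⊗ℂ²)^{⊗n}) admits expansions Ω_n = Σ_{s,t ∈ J} (σ^s τ^t) ⊗ P^{s,t} (first tensor factor = site 1) and Ω_n = Σ_{s,t ∈ J} Q^{s,t} ⊗ (σ^s τ^t) (last tensor factor = site n) with P^{s,t}, Q^{s,t} ∈ End((ℂ²⊗ℂ²)^{⊗(n−1)}), such that: (a) P^{s,t} = 0 whenever s ∈ {−,z} or t ∈ {−,z}; (b) Q^{s,t} = 0 whenever s ∈ {+,z} or t ∈ {+,z}; (c) [H, Ω_n] = −iε·Σ_{s ∈ {0,+}} ( σᶻτ^s ⊗ P^{0,s} + σ^sτᶻ ⊗ P^{s,0} − Q^{0,−s} ⊗ σᶻτ^{−s} − Q^{−s,0} ⊗ σ^{−s}τᶻ ), where −0 := 0 and −(+) := −. Then R := Ω_n Ω_n† satisfies −i[H, R] + ε·( D_{σ⁺₁}(R) + D_{τ⁺₁}(R) + D_{σ⁻ₙ}(R)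 + D_{τ⁻ₙ}(R) ) = 0. -/
import Mathlib


open Matrix Kronecker

noncomputable section

abbrev M2 : Type := Matrix (Fin 2) (Fin 2) ℂ
abbrev M4 : Type := Matrix (Fin 2 × Fin 2) (Fin 2 × Fin 2) ℂ

def σx : M2 := !![0, 1; 1, 0]
def σy : M2 := !![0, -Complex.I; Complex.I, 0]
def σz : M2 := !![1, 0; 0, -1]
def σ0 : M2 := 1
def σp : M2 := (1/2 : ℂ) • (σx + Complex.I • σy)
def σm : M2 := (1/2 : ℂ) • (σx - Complex.I • σy)

/-- Operators on the Hubbard ladder `(ℂ²⊗ℂ²)^{⊗n}`: each site carries a σ-qubit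
(first component) and a τ-qubit (second component). -/
abbrev HChainOp (n : ℕ) : Type := Matrix (Fin n → Fin 2 × Fin 2) (Fin n → Fin 2 × Fin 2) ℂ

/-- `σ^a` acting on the σ-qubit of site `x` (identity elsewhere). -/
def hsiteσ {n : ℕ} (x : Fin n) (a : M2) : HChainOp n :=
  Matrix.of fun i j =>
    a (i x).1 (j x).1 * (if (i x).2 = (j x).2 then (1:ℂ) else 0)
      * ∏ y ∈ Finset.univ.filter (fun y => y ≠ x), (if i y = j y then (1:ℂ) else 0)

/-- `τ^a` acting on the τ-qubit of site `x` (identity elsewhere). -/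
def hsiteτ {n : ℕ} (x : Fin n) (a : M2) : HChainOp n :=
  Matrix.of fun i j =>
    a (i x).2 (j x).2 * (if (i x).1 = (j x).1 then (1:ℂ) else 0)
      * ∏ y ∈ Finset.univ.filter (fun y => y ≠ x), (if i y = j y then (1:ℂ) else 0)

/-- The boundary-symmetric Hubbard Hamiltonian
`H = Σ_x (2σ⁺ₓσ⁻_{x+1}+2σ⁻ₓσ⁺_{x+1}+2τ⁺ₓτ⁻_{x+1}+2τ⁻ₓτ⁺_{x+1}) + u Σ_x σᶻₓτᶻₓ`. -/
def Hubbard (u : ℂ) (n : ℕ) : HChainOp n :=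
  (∑ x : Fin n,
    if h : (x : ℕ) + 1 < n then
      (2:ℂ) • (hsiteσ x σp * hsiteσ ⟨(x:ℕ)+1, h⟩ σm)
        + (2:ℂ) • (hsiteσ x σm * hsiteσ ⟨(x:ℕ)+1, h⟩ σp)
        + (2:ℂ) • (hsiteτ x σp * hsiteτ ⟨(x:ℕ)+1, h⟩ σm)
        + (2:ℂ) • (hsiteτ x σm * hsiteτ ⟨(x:ℕ)+1, h⟩ σp)
    else 0)
  + u • ∑ x : Fin n, hsiteσ x σz * hsiteτ x σz

/-- The Lindblad dissipator `D_L(ρ) = 2LρL† − L†Lρ − ρL†L`. -/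
def hDissip {n : ℕ} (L ρ : HChainOp n) : HChainOp n :=
  (2:ℂ) • (L * ρ * Lᴴ) - Lᴴ * L * ρ - ρ * (Lᴴ * L)

/-- `a ⊗ B` : a one-site (4-dim) operator tensored with an operator on the remaining sites. -/
def htensL {m : ℕ} (a : M4) (B : HChainOp m) : HChainOp (m+1) :=
  Matrix.of fun i j => a (i 0) (j 0) * B (fun y => i y.succ) (fun y => j y.succ)

/-- `B ⊗ a` : an operator on the first `m` sites tensored with a one-site operator. -/
def htensR {m : ℕ} (B : HChainOp m) (a : M4) : HChainOp (m+1) :=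
  Matrix.of fun i j =>
    B (fun y => i y.castSucc) (fun y => j y.castSucc) * a (i (Fin.last m)) (j (Fin.last m))

/-- The Pauli operators indexed by `J = {0, +, −, z}`
(so `0 ↦ σ⁰`, `1 ↦ σ⁺`, `2 ↦ σ⁻`, `3 ↦ σᶻ`, and `−0 = 0`, `−(+) = −`). -/
def pauliJ : Fin 4 → M2 := ![σ0, σp, σm, σz]

/-! ### Auxiliary machinery -/

section Aux

/-- generic 2×2 complex matrices facts -/
lemma σp_eq : σp = !![0, 1; 0, 0] := by
  ext i j
  fin_cases i <;> fin_cases j <;> simp [σp, σx, σy, Complex.ext_iff] <;> norm_num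

lemma σm_eq : σm = !![0, 0; 1, 0] := by
  ext i j
  fin_cases i <;> fin_cases j <;> simp [σm, σx, σy, Complex.ext_iff] <;> norm_num

lemma σp_conjT : σpᴴ = σm := by
  rw [σp_eq, σm_eq]; ext i j; fin_cases i <;> fin_cases j <;> simp

lemma σm_conjT : σmᴴ = σp := by
  rw [σp_eq, σm_eq]; ext i j; fin_cases i <;> fin_cases j <;> simp

lemma σz_conjT : σzᴴ = σz := by
  ext i j; fin_cases i <;> fin_cases j <;> simp [σz]

lemma kron_conjT (a b : M2) : (a ⊗ₖ b)ᴴ = aᴴ ⊗ₖ bᴴ := by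
  ext i j
  simp [Matrix.conjTranspose_apply, Matrix.kroneckerMap_apply, _root_.map_mul]

lemma sub_kron (a b c : M2) : (a - b) ⊗ₖ c = a ⊗ₖ c - b ⊗ₖ c := by
  ext i j; simp [Matrix.kroneckerMap_apply, sub_mul]

lemma kron_sub (a b c : M2) : a ⊗ₖ (b - c) = a ⊗ₖ b - a ⊗ₖ c := by
  ext i j; simp [Matrix.kroneckerMap_apply, mul_sub]

lemma neg_kron (a c : M2) : (-a) ⊗ₖ c = -(a ⊗ₖ c) := by
  ext i j; simp [Matrix.kroneckerMap_apply]

lemma kron_neg (a c : M2) : a ⊗ₖ (-c) = -(a ⊗ₖ c) := by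
  ext i j; simp [Matrix.kroneckerMap_apply]

/-! #### `bigOp` : operators acting site-wise -/

def bigOp {n : ℕ} (f : Fin n → M4) : HChainOp n :=
  Matrix.of fun i j => ∏ y, f y (i y) (j y)

lemma bigOp_mul {n : ℕ} (f g : Fin n → M4) :
    bigOp f * bigOp g = bigOp (fun y => f y * g y) := by
  ext i j
  show ∑ k : Fin n → Fin 2 × Fin 2, (∏ y, f y (i y) (k y)) * ∏ y, g y (k y) (j y) = _
  simp only [← Finset.prod_mul_distrib]
  rw [show (bigOp (fun y => f y * g y) : HChainOp n) i j
      = ∏ y, ∑ c : Fin 2 × Fin 2, f y (i y) c * g y c (j y) from rfl]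
  rw [Finset.prod_univ_sum]
  rw [Fintype.piFinset_univ]

lemma bigOp_conjT {n : ℕ} (f : Fin n → M4) :
    (bigOp f)ᴴ = bigOp (fun y => (f y)ᴴ) := by
  ext i j
  simp [bigOp, Matrix.conjTranspose_apply]

lemma bigOp_comm {n : ℕ} (f g : Fin n → M4) (h : ∀ y, f y * g y = g y * f y) :
    bigOp f * bigOp g = bigOp g * bigOp f := by
  rw [bigOp_mul, bigOp_mul]
  have : (fun y => f y * g y) = fun y => g y * f y := funext h
  rw [this]

lemma hsiteσ_eq_bigOp {n : ℕ} (x : Fin n) (a : M2) :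
    hsiteσ x a = bigOp (fun y => if y = x then a ⊗ₖ (1:M2) else 1) := by
  ext i j
  simp only [bigOp, Matrix.of_apply]
  rw [← Finset.prod_filter_mul_prod_filter_not Finset.univ (fun y => y = x)]
  have hx : Finset.univ.filter (fun y => y = x) = {x} := by
    ext y; simp
  rw [hx, Finset.prod_singleton]
  simp only [if_pos rfl, if_true]
  have : ∀ y ∈ Finset.univ.filter (fun y => ¬ y = x),
      ((if y = x then (a ⊗ₖ (1:M2)) else (1:M4)) (i y) (j y))
        = (if i y = j y then (1:ℂ) else 0) := by
    intro y hy
    simp only [Finset.mem_filter] at hy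
    rw [if_neg hy.2, Matrix.one_apply]
  rw [Finset.prod_congr rfl this]
  simp only [hsiteσ, Matrix.of_apply, Matrix.kroneckerMap_apply, Matrix.one_apply]

lemma hsiteτ_eq_bigOp {n : ℕ} (x : Fin n) (a : M2) :
    hsiteτ x a = bigOp (fun y => if y = x then (1:M2) ⊗ₖ a else 1) := by
  ext i j
  simp only [bigOp, Matrix.of_apply]
  rw [← Finset.prod_filter_mul_prod_filter_not Finset.univ (fun y => y = x)]
  have hx : Finset.univ.filter (fun y => y = x) = {x} := by
    ext y; simp
  rw [hx, Finset.prod_singleton]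
  simp only [if_pos rfl, if_true]
  have : ∀ y ∈ Finset.univ.filter (fun y => ¬ y = x),
      ((if y = x then ((1:M2) ⊗ₖ a) else (1:M4)) (i y) (j y))
        = (if i y = j y then (1:ℂ) else 0) := by
    intro y hy
    simp only [Finset.mem_filter] at hy
    rw [if_neg hy.2, Matrix.one_apply]
  rw [Finset.prod_congr rfl this]
  simp only [hsiteτ, Matrix.of_apply, Matrix.kroneckerMap_apply, Matrix.one_apply]
  ring

/-! #### Hermiticity of the Hubbard Hamiltonian -/

lemma hsiteσ_conjT {n : ℕ} (x : Fin n) (a : M2) : (hsiteσ x a)ᴴ = hsiteσ x aᴴ := by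
  rw [hsiteσ_eq_bigOp, hsiteσ_eq_bigOp, bigOp_conjT]
  have : (fun y : Fin n => (if y = x then a ⊗ₖ (1:M2) else 1 : M4)ᴴ)
      = fun y => if y = x then aᴴ ⊗ₖ (1:M2) else 1 := by
    funext y
    rw [apply_ite (fun M : M4 => Mᴴ), kron_conjT, Matrix.conjTranspose_one,
      Matrix.conjTranspose_one]
  rw [this]

lemma hsiteτ_conjT {n : ℕ} (x : Fin n) (a : M2) : (hsiteτ x a)ᴴ = hsiteτ x aᴴ := by
  rw [hsiteτ_eq_bigOp, hsiteτ_eq_bigOp, bigOp_conjT]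
  have : (fun y : Fin n => (if y = x then (1:M2) ⊗ₖ a else 1 : M4)ᴴ)
      = fun y => if y = x then (1:M2) ⊗ₖ aᴴ else 1 := by
    funext y
    rw [apply_ite (fun M : M4 => Mᴴ), kron_conjT, Matrix.conjTranspose_one,
      Matrix.conjTranspose_one]
  rw [this]

lemma hsiteσσ_comm {n : ℕ} {x y : Fin n} (hxy : x ≠ y) (a b : M2) :
    hsiteσ x a * hsiteσ y b = hsiteσ y b * hsiteσ x a := by
  rw [hsiteσ_eq_bigOp, hsiteσ_eq_bigOp]
  apply bigOp_comm
  intro z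
  by_cases h1 : z = x
  · rw [if_pos h1, if_neg (by rw [h1]; exact hxy), one_mul, mul_one]
  · rw [if_neg h1]
    by_cases h2 : z = y
    · rw [if_pos h2, one_mul, mul_one]
    · rw [if_neg h2, one_mul]

lemma hsiteττ_comm {n : ℕ} {x y : Fin n} (hxy : x ≠ y) (a b : M2) :
    hsiteτ x a * hsiteτ y b = hsiteτ y b * hsiteτ x a := by
  rw [hsiteτ_eq_bigOp, hsiteτ_eq_bigOp]
  apply bigOp_comm
  intro z
  by_cases h1 : z = x
  · rw [if_pos h1, if_neg (by rw [h1]; exact hxy), one_mul, mul_one]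
  · rw [if_neg h1]
    by_cases h2 : z = y
    · rw [if_pos h2, one_mul, mul_one]
    · rw [if_neg h2, one_mul]

lemma hsiteστ_comm {n : ℕ} (x y : Fin n) (a b : M2) :
    hsiteσ x a * hsiteτ y b = hsiteτ y b * hsiteσ x a := by
  rw [hsiteσ_eq_bigOp, hsiteτ_eq_bigOp]
  apply bigOp_comm
  intro z
  by_cases h1 : z = x
  · by_cases h2 : z = y
    · rw [if_pos h1, if_pos h2]
      rw [← Matrix.mul_kronecker_mul, ← Matrix.mul_kronecker_mul, mul_one, one_mul,
        mul_one, one_mul]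
    · rw [if_pos h1, if_neg h2, one_mul, mul_one]
  · rw [if_neg h1, one_mul, mul_one]

lemma hubbard_conjT (n : ℕ) (u : ℝ) : (Hubbard (u:ℂ) n)ᴴ = Hubbard (u:ℂ) n := by
  unfold Hubbard
  rw [Matrix.conjTranspose_add, Matrix.conjTranspose_smul, Matrix.conjTranspose_sum,
    Matrix.conjTranspose_sum]
  congr 1
  · refine Finset.sum_congr rfl fun x _ => ?_
    rw [apply_dite (fun M : HChainOp n => Mᴴ)]
    by_cases h : (x:ℕ)+1 < n
    · rw [dif_pos h, dif_pos h]
      have hne : (⟨(x:ℕ)+1, h⟩ : Fin n) ≠ x := by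
        refine Fin.ne_of_val_ne ?_
        show (x:ℕ)+1 ≠ (x:ℕ)
        omega
      simp only [Matrix.conjTranspose_add, Matrix.conjTranspose_smul,
        Matrix.conjTranspose_mul, hsiteσ_conjT, hsiteτ_conjT, σp_conjT, σm_conjT]
      have h2 : star (2:ℂ) = 2 := by simp
      rw [h2, hsiteσσ_comm hne, hsiteσσ_comm hne, hsiteττ_comm hne, hsiteττ_comm hne]
      abel
    · rw [dif_neg h, dif_neg h, Matrix.conjTranspose_zero]
  · have hu : star (u:ℂ) = u := by simp [Complex.star_def, Complex.conj_ofReal]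
    rw [hu]
    congr 1
    refine Finset.sum_congr rfl fun x _ => ?_
    rw [Matrix.conjTranspose_mul, hsiteσ_conjT, hsiteτ_conjT, σz_conjT, hsiteστ_comm]

/-! #### `htensL` / `htensR` algebra -/

lemma htensL_mul {m : ℕ} (a a' : M4) (B B' : HChainOp m) :
    htensL a B * htensL a' B' = htensL (a * a') (B * B') := by
  ext i j
  show ∑ k : Fin (m+1) → Fin 2 × Fin 2, _ = _
  rw [← (Fin.consEquiv (fun _ => Fin 2 × Fin 2)).sum_comp]
  rw [Fintype.sum_prod_type]
  simp only [htensL, Matrix.of_apply, Fin.consEquiv_apply, Fin.cons_zero, Fin.cons_succ]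
  rw [Matrix.mul_apply, Matrix.mul_apply, Finset.sum_mul_sum]
  congr 1; ext c; congr 1; ext g; ring

lemma htensR_mul {m : ℕ} (a a' : M4) (B B' : HChainOp m) :
    htensR B a * htensR B' a' = htensR (B * B') (a * a') := by
  ext i j
  show ∑ k : Fin (m+1) → Fin 2 × Fin 2, _ = _
  rw [← (Fin.snocEquiv (fun _ => Fin 2 × Fin 2)).sum_comp]
  rw [Fintype.sum_prod_type]
  simp only [htensR, Matrix.of_apply, Fin.snocEquiv_apply, Fin.snoc_last, Fin.snoc_castSucc]
  rw [Matrix.mul_apply, Matrix.mul_apply, Finset.sum_mul_sum]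
  rw [Finset.sum_comm]
  congr 1; ext g; congr 1; ext c; ring

lemma htensL_conjT {m : ℕ} (a : M4) (B : HChainOp m) :
    (htensL a B)ᴴ = htensL aᴴ Bᴴ := by
  ext i j
  simp [htensL, Matrix.conjTranspose_apply, _root_.map_mul]

lemma htensR_conjT {m : ℕ} (a : M4) (B : HChainOp m) :
    (htensR B a)ᴴ = htensR Bᴴ aᴴ := by
  ext i j
  simp [htensR, Matrix.conjTranspose_apply, _root_.map_mul]

lemma htensL_add_left {m : ℕ} (a a' : M4) (B : HChainOp m) :
    htensL (a + a') B = htensL a B + htensL a' B := by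
  ext i j; simp [htensL, add_mul]

lemma htensL_sub_left {m : ℕ} (a a' : M4) (B : HChainOp m) :
    htensL (a - a') B = htensL a B - htensL a' B := by
  ext i j; simp [htensL, sub_mul]

lemma htensL_smul_left {m : ℕ} (c : ℂ) (a : M4) (B : HChainOp m) :
    htensL (c • a) B = c • htensL a B := by
  ext i j; simp [htensL]; ring

lemma htensL_zero_left {m : ℕ} (B : HChainOp m) : htensL 0 B = 0 := by
  ext i j; simp [htensL]

lemma htensL_zero_right {m : ℕ} (a : M4) : htensL a (0 : HChainOp m) = 0 := by
  ext i j; simp [htensL]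

lemma htensL_neg_left {m : ℕ} (a : M4) (B : HChainOp m) :
    htensL (-a) B = -htensL a B := by
  ext i j; simp [htensL]

lemma htensR_add_right {m : ℕ} (a a' : M4) (B : HChainOp m) :
    htensR B (a + a') = htensR B a + htensR B a' := by
  ext i j; simp [htensR, mul_add]

lemma htensR_sub_right {m : ℕ} (a a' : M4) (B : HChainOp m) :
    htensR B (a - a') = htensR B a - htensR B a' := by
  ext i j; simp [htensR, mul_sub]

lemma htensR_smul_right {m : ℕ} (c : ℂ) (a : M4) (B : HChainOp m) :
    htensR B (c • a) = c • htensR B a := by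
  ext i j; simp [htensR]; ring

lemma htensR_zero_right {m : ℕ} (B : HChainOp m) : htensR B 0 = 0 := by
  ext i j; simp [htensR]

lemma htensR_zero_left {m : ℕ} (a : M4) : htensR (0 : HChainOp m) a = 0 := by
  ext i j; simp [htensR]

lemma htensR_neg_right {m : ℕ} (a : M4) (B : HChainOp m) :
    htensR B (-a) = -htensR B a := by
  ext i j; simp [htensR]

/-! #### boundary sites as tensor factors -/

lemma hsiteσ_zero_eq_htensL {m : ℕ} (a : M2) :
    hsiteσ (0 : Fin (m+1)) a = htensL (a ⊗ₖ (1:M2)) 1 := by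
  ext i j
  simp only [hsiteσ, htensL, Matrix.of_apply, Matrix.kroneckerMap_apply,
    Matrix.one_apply, Finset.prod_boole]
  have hiff : (∀ y ∈ Finset.univ.filter (fun y : Fin (m+1) => y ≠ 0), i y = j y)
      ↔ ((fun y : Fin m => i y.succ) = fun y => j y.succ) := by
    constructor
    · intro h
      funext z
      exact h z.succ (by simp [Fin.succ_ne_zero])
    · intro h y hy
      simp only [Finset.mem_filter, Finset.mem_univ, true_and] at hy
      have := congrFun h (y.pred hy)
      simpa [Fin.succ_pred] using this
  simp only [hiff]

lemma hsiteτ_zero_eq_htensL {m : ℕ} (a : M2) :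
    hsiteτ (0 : Fin (m+1)) a = htensL ((1:M2) ⊗ₖ a) 1 := by
  ext i j
  simp only [hsiteτ, htensL, Matrix.of_apply, Matrix.kroneckerMap_apply,
    Matrix.one_apply, Finset.prod_boole]
  have hiff : (∀ y ∈ Finset.univ.filter (fun y : Fin (m+1) => y ≠ 0), i y = j y)
      ↔ ((fun y : Fin m => i y.succ) = fun y => j y.succ) := by
    constructor
    · intro h
      funext z
      exact h z.succ (by simp [Fin.succ_ne_zero])
    · intro h y hy
      simp only [Finset.mem_filter, Finset.mem_univ, true_and] at hy
      have := congrFun h (y.pred hy)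
      simpa [Fin.succ_pred] using this
  simp only [hiff]
  ring

lemma hsiteσ_last_eq_htensR {m : ℕ} (a : M2) :
    hsiteσ (Fin.last m) a = htensR 1 (a ⊗ₖ (1:M2)) := by
  ext i j
  simp only [hsiteσ, htensR, Matrix.of_apply, Matrix.kroneckerMap_apply,
    Matrix.one_apply, Finset.prod_boole]
  have hiff : (∀ y ∈ Finset.univ.filter (fun y : Fin (m+1) => y ≠ Fin.last m), i y = j y)
      ↔ ((fun y : Fin m => i y.castSucc) = fun y => j y.castSucc) := by
    constructor
    · intro h
      funext z
      exact h z.castSucc (by simp [Fin.ne_of_lt (Fin.castSucc_lt_last z)])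
    · intro h y hy
      simp only [Finset.mem_filter, Finset.mem_univ, true_and] at hy
      have hy' : y < Fin.last m := lt_of_le_of_ne (Fin.le_last y) hy
      have := congrFun h (y.castPred (Fin.ne_of_lt hy'))
      simpa [Fin.castSucc_castPred] using this
  simp only [hiff]
  ring

lemma hsiteτ_last_eq_htensR {m : ℕ} (a : M2) :
    hsiteτ (Fin.last m) a = htensR 1 ((1:M2) ⊗ₖ a) := by
  ext i j
  simp only [hsiteτ, htensR, Matrix.of_apply, Matrix.kroneckerMap_apply,
    Matrix.one_apply, Finset.prod_boole]
  have hiff : (∀ y ∈ Finset.univ.filter (fun y : Fin (m+1) => y ≠ Fin.last m), i y = j y)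
      ↔ ((fun y : Fin m => i y.castSucc) = fun y => j y.castSucc) := by
    constructor
    · intro h
      funext z
      exact h z.castSucc (by simp [Fin.ne_of_lt (Fin.castSucc_lt_last z)])
    · intro h y hy
      simp only [Finset.mem_filter, Finset.mem_univ, true_and] at hy
      have hy' : y < Fin.last m := lt_of_le_of_ne (Fin.le_last y) hy
      have := congrFun h (y.castPred (Fin.ne_of_lt hy'))
      simpa [Fin.castSucc_castPred] using this
  simp only [hiff]
  ring

end Aux
/-! #### dissipator algebra -/

section Aux2

lemma hDissip_htensL {m : ℕ} (ℓ a : M4) (B : HChainOp m) :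
    hDissip (htensL ℓ 1) (htensL a B)
      = htensL ((2:ℂ)•(ℓ*a*ℓᴴ) - ℓᴴ*ℓ*a - a*(ℓᴴ*ℓ)) B := by
  unfold hDissip
  rw [htensL_conjT, Matrix.conjTranspose_one]
  rw [htensL_mul, htensL_mul, htensL_mul, htensL_mul, htensL_mul]
  simp only [Matrix.one_mul, Matrix.mul_one, htensL_sub_left, htensL_smul_left]

lemma hDissip_htensR {m : ℕ} (ℓ a : M4) (B : HChainOp m) :
    hDissip (htensR 1 ℓ) (htensR B a)
      = htensR B ((2:ℂ)•(ℓ*a*ℓᴴ) - ℓᴴ*ℓ*a - a*(ℓᴴ*ℓ)) := by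
  unfold hDissip
  rw [htensR_conjT, Matrix.conjTranspose_one]
  rw [htensR_mul, htensR_mul, htensR_mul, htensR_mul, htensR_mul]
  simp only [Matrix.one_mul, Matrix.mul_one, htensR_sub_right, htensR_smul_right]

lemma hDissip_sum {n : ℕ} (L : HChainOp n) {ι : Type*} (s : Finset ι)
    (f : ι → HChainOp n) :
    hDissip L (∑ i ∈ s, f i) = ∑ i ∈ s, hDissip L (f i) := by
  unfold hDissip
  simp only [Finset.mul_sum, Finset.sum_mul, Finset.smul_sum, Finset.sum_sub_distrib]

/-! #### one-qubit dissipator identities -/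

def bL : Fin 4 → M2 := ![σz, 0, 0, 0]
def bR : Fin 4 → M2 := ![-σz, 0, 0, 0]

lemma fin4_01 {s : Fin 4} (h2 : ¬ s = 2) (h3 : ¬ s = 3) : s = 0 ∨ s = 1 := by
  fin_cases s <;> simp_all

lemma fin4_02 {s : Fin 4} (h1 : ¬ s = 1) (h3 : ¬ s = 3) : s = 0 ∨ s = 2 := by
  fin_cases s <;> simp_all

lemma qLi (s s' : Fin 4) (hs : s = 0 ∨ s = 1) (hs' : s' = 0 ∨ s' = 1) :
    (2:ℂ)•(σp*(pauliJ s*(pauliJ s')ᴴ)*σpᴴ) - σpᴴ*σp*(pauliJ s*(pauliJ s')ᴴ)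
      - (pauliJ s*(pauliJ s')ᴴ)*(σpᴴ*σp)
    = bL s * (pauliJ s')ᴴ + pauliJ s * (bL s')ᴴ := by
  rcases hs with rfl | rfl <;> rcases hs' with rfl | rfl <;>
    · simp only [pauliJ, bL, Matrix.cons_val_zero, Matrix.cons_val_one, Matrix.head_cons, σ0]
      rw [σp_eq]
      ext i j
      fin_cases i <;> fin_cases j <;>
        simp [σz, Matrix.mul_apply, Matrix.conjTranspose_apply, Fin.sum_univ_succ,
          Matrix.vecMul, dotProduct, Matrix.one_apply] <;> ring

lemma qRi (s s' : Fin 4) (hs : s = 0 ∨ s = 2) (hs' : s' = 0 ∨ s' = 2) :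
    (2:ℂ)•(σm*(pauliJ s*(pauliJ s')ᴴ)*σmᴴ) - σmᴴ*σm*(pauliJ s*(pauliJ s')ᴴ)
      - (pauliJ s*(pauliJ s')ᴴ)*(σmᴴ*σm)
    = bR s * (pauliJ s')ᴴ + pauliJ s * (bR s')ᴴ := by
  rcases hs with rfl | rfl <;> rcases hs' with rfl | rfl <;>
    · simp only [pauliJ, bR, Matrix.cons_val_zero, Matrix.cons_val_one, Matrix.head_cons, σ0]
      rw [σm_eq]
      ext i j
      fin_cases i <;> fin_cases j <;>
        simp [σz, Matrix.mul_apply, Matrix.conjTranspose_apply, Fin.sum_univ_succ,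
          Matrix.vecMul, dotProduct, Matrix.one_apply] <;> ring

/-! #### lifting the one-qubit identities to one site -/

lemma liftGen (L e f e' f' be bf be' bf' : M2)
    (hσ : (2:ℂ)•(L*(e*e'ᴴ)*Lᴴ) - Lᴴ*L*(e*e'ᴴ) - (e*e'ᴴ)*(Lᴴ*L) = be*e'ᴴ + e*be'ᴴ)
    (hτ : (2:ℂ)•(L*(f*f'ᴴ)*Lᴴ) - Lᴴ*L*(f*f'ᴴ) - (f*f'ᴴ)*(Lᴴ*L) = bf*f'ᴴ + f*bf'ᴴ) :
    ((2:ℂ)•((L ⊗ₖ (1:M2)) * ((e ⊗ₖ f)*((e' ⊗ₖ f')ᴴ)) * ((L ⊗ₖ (1:M2))ᴴ))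
      - (L ⊗ₖ (1:M2))ᴴ*(L ⊗ₖ (1:M2))*((e ⊗ₖ f)*((e' ⊗ₖ f')ᴴ))
      - ((e ⊗ₖ f)*((e' ⊗ₖ f')ᴴ))*((L ⊗ₖ (1:M2))ᴴ*(L ⊗ₖ (1:M2))))
    + ((2:ℂ)•(((1:M2) ⊗ₖ L) * ((e ⊗ₖ f)*((e' ⊗ₖ f')ᴴ)) * (((1:M2) ⊗ₖ L)ᴴ))
      - ((1:M2) ⊗ₖ L)ᴴ*((1:M2) ⊗ₖ L)*((e ⊗ₖ f)*((e' ⊗ₖ f')ᴴ))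
      - ((e ⊗ₖ f)*((e' ⊗ₖ f')ᴴ))*(((1:M2) ⊗ₖ L)ᴴ*((1:M2) ⊗ₖ L)))
    = (be ⊗ₖ f + e ⊗ₖ bf)*((e' ⊗ₖ f')ᴴ) + (e ⊗ₖ f)*((be' ⊗ₖ f' + e' ⊗ₖ bf')ᴴ) := by
  have h1 : ((2:ℂ)•(L*(e*e'ᴴ)*Lᴴ) - Lᴴ*L*(e*e'ᴴ) - (e*e'ᴴ)*(Lᴴ*L)) ⊗ₖ (f*f'ᴴ)
      = (be*e'ᴴ + e*be'ᴴ) ⊗ₖ (f*f'ᴴ) := by rw [hσ]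
  have h2 : (e*e'ᴴ) ⊗ₖ ((2:ℂ)•(L*(f*f'ᴴ)*Lᴴ) - Lᴴ*L*(f*f'ᴴ) - (f*f'ᴴ)*(Lᴴ*L))
      = (e*e'ᴴ) ⊗ₖ (bf*f'ᴴ + f*bf'ᴴ) := by rw [hτ]
  simp only [sub_kron, kron_sub, Matrix.add_kronecker, Matrix.kronecker_add,
    Matrix.smul_kronecker, Matrix.kronecker_smul,
    ← Matrix.mul_kronecker_mul, kron_conjT, Matrix.conjTranspose_one,
    Matrix.conjTranspose_add, Matrix.add_mul, Matrix.mul_add,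
    Matrix.mul_one, Matrix.one_mul] at h1 h2 ⊢
  rw [h1, h2]
  abel

/-- the left-edge one-site identity, index form -/
lemma keyMatL (s t s' t' : Fin 4) (hs : s = 0 ∨ s = 1) (ht : t = 0 ∨ t = 1)
    (hs' : s' = 0 ∨ s' = 1) (ht' : t' = 0 ∨ t' = 1) :
    ((2:ℂ)•((σp ⊗ₖ (1:M2)) * ((pauliJ s ⊗ₖ pauliJ t)*((pauliJ s' ⊗ₖ pauliJ t')ᴴ))
          * ((σp ⊗ₖ (1:M2))ᴴ))
      - (σp ⊗ₖ (1:M2))ᴴ*(σp ⊗ₖ (1:M2))*((pauliJ s ⊗ₖ pauliJ t)*((pauliJ s' ⊗ₖ pauliJ t')ᴴ))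
      - ((pauliJ s ⊗ₖ pauliJ t)*((pauliJ s' ⊗ₖ pauliJ t')ᴴ))*((σp ⊗ₖ (1:M2))ᴴ*(σp ⊗ₖ (1:M2))))
    + ((2:ℂ)•(((1:M2) ⊗ₖ σp) * ((pauliJ s ⊗ₖ pauliJ t)*((pauliJ s' ⊗ₖ pauliJ t')ᴴ))
          * (((1:M2) ⊗ₖ σp)ᴴ))
      - ((1:M2) ⊗ₖ σp)ᴴ*((1:M2) ⊗ₖ σp)*((pauliJ s ⊗ₖ pauliJ t)*((pauliJ s' ⊗ₖ pauliJ t')ᴴ))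
      - ((pauliJ s ⊗ₖ pauliJ t)*((pauliJ s' ⊗ₖ pauliJ t')ᴴ))*(((1:M2) ⊗ₖ σp)ᴴ*((1:M2) ⊗ₖ σp)))
    = (bL s ⊗ₖ pauliJ t + pauliJ s ⊗ₖ bL t)*((pauliJ s' ⊗ₖ pauliJ t')ᴴ)
      + (pauliJ s ⊗ₖ pauliJ t)*((bL s' ⊗ₖ pauliJ t' + pauliJ s' ⊗ₖ bL t')ᴴ) :=
  liftGen σp (pauliJ s) (pauliJ t) (pauliJ s') (pauliJ t') (bL s) (bL t) (bL s') (bL t')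
    (qLi s s' hs hs') (qLi t t' ht ht')

/-- the right-edge one-site identity, index form -/
lemma keyMatR (s t s' t' : Fin 4) (hs : s = 0 ∨ s = 2) (ht : t = 0 ∨ t = 2)
    (hs' : s' = 0 ∨ s' = 2) (ht' : t' = 0 ∨ t' = 2) :
    ((2:ℂ)•((σm ⊗ₖ (1:M2)) * ((pauliJ s ⊗ₖ pauliJ t)*((pauliJ s' ⊗ₖ pauliJ t')ᴴ))
          * ((σm ⊗ₖ (1:M2))ᴴ))
      - (σm ⊗ₖ (1:M2))ᴴ*(σm ⊗ₖ (1:M2))*((pauliJ s ⊗ₖ pauliJ t)*((pauliJ s' ⊗ₖ pauliJ t')ᴴ))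
      - ((pauliJ s ⊗ₖ pauliJ t)*((pauliJ s' ⊗ₖ pauliJ t')ᴴ))*((σm ⊗ₖ (1:M2))ᴴ*(σm ⊗ₖ (1:M2))))
    + ((2:ℂ)•(((1:M2) ⊗ₖ σm) * ((pauliJ s ⊗ₖ pauliJ t)*((pauliJ s' ⊗ₖ pauliJ t')ᴴ))
          * (((1:M2) ⊗ₖ σm)ᴴ))
      - ((1:M2) ⊗ₖ σm)ᴴ*((1:M2) ⊗ₖ σm)*((pauliJ s ⊗ₖ pauliJ t)*((pauliJ s' ⊗ₖ pauliJ t')ᴴ))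
      - ((pauliJ s ⊗ₖ pauliJ t)*((pauliJ s' ⊗ₖ pauliJ t')ᴴ))*(((1:M2) ⊗ₖ σm)ᴴ*((1:M2) ⊗ₖ σm)))
    = (bR s ⊗ₖ pauliJ t + pauliJ s ⊗ₖ bR t)*((pauliJ s' ⊗ₖ pauliJ t')ᴴ)
      + (pauliJ s ⊗ₖ pauliJ t)*((bR s' ⊗ₖ pauliJ t' + pauliJ s' ⊗ₖ bR t')ᴴ) :=
  liftGen σm (pauliJ s) (pauliJ t) (pauliJ s') (pauliJ t') (bR s) (bR t) (bR s') (bR t')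
    (qRi s s' hs hs') (qRi t t' ht ht')

end Aux2
section Aux3

lemma keyL {m : ℕ} (Ω : HChainOp (m+1)) (P : Fin 4 → Fin 4 → HChainOp m)
    (hP : ∀ s t : Fin 4, (s = 2 ∨ s = 3 ∨ t = 2 ∨ t = 3) → P s t = 0)
    (hexpL : Ω = ∑ s : Fin 4, ∑ t : Fin 4, htensL (pauliJ s ⊗ₖ pauliJ t) (P s t)) :
    hDissip (htensL (σp ⊗ₖ (1:M2)) 1) (Ω * Ωᴴ) + hDissip (htensL ((1:M2) ⊗ₖ σp) 1) (Ω * Ωᴴ)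
      = (∑ s : Fin 4, ∑ t : Fin 4, htensL (bL s ⊗ₖ pauliJ t + pauliJ s ⊗ₖ bL t) (P s t)) * Ωᴴ
        + Ω * (∑ s : Fin 4, ∑ t : Fin 4,
            htensL (bL s ⊗ₖ pauliJ t + pauliJ s ⊗ₖ bL t) (P s t))ᴴ := by
  have hΩH : Ωᴴ = ∑ s : Fin 4, ∑ t : Fin 4,
      htensL ((pauliJ s ⊗ₖ pauliJ t)ᴴ) ((P s t)ᴴ) := by
    rw [hexpL]
    simp only [Matrix.conjTranspose_sum, htensL_conjT]
  have hSH : (∑ s : Fin 4, ∑ t : Fin 4,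
        htensL (bL s ⊗ₖ pauliJ t + pauliJ s ⊗ₖ bL t) (P s t))ᴴ
      = ∑ s : Fin 4, ∑ t : Fin 4,
        htensL ((bL s ⊗ₖ pauliJ t + pauliJ s ⊗ₖ bL t)ᴴ) ((P s t)ᴴ) := by
    simp only [Matrix.conjTranspose_sum, htensL_conjT]
  have hR : Ω * Ωᴴ = ∑ s : Fin 4, ∑ s' : Fin 4, ∑ t : Fin 4, ∑ t' : Fin 4,
      htensL ((pauliJ s ⊗ₖ pauliJ t) * ((pauliJ s' ⊗ₖ pauliJ t')ᴴ))
        (P s t * (P s' t')ᴴ) := by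
    rw [hΩH]
    conv_lhs => rw [hexpL]
    rw [Finset.sum_mul_sum]
    refine Finset.sum_congr rfl fun s _ => Finset.sum_congr rfl fun s' _ => ?_
    rw [Finset.sum_mul_sum]
    refine Finset.sum_congr rfl fun t _ => Finset.sum_congr rfl fun t' _ => ?_
    rw [htensL_mul]
  have hXΩ : (∑ s : Fin 4, ∑ t : Fin 4,
        htensL (bL s ⊗ₖ pauliJ t + pauliJ s ⊗ₖ bL t) (P s t)) * Ωᴴ
      = ∑ s : Fin 4, ∑ s' : Fin 4, ∑ t : Fin 4, ∑ t' : Fin 4,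
        htensL ((bL s ⊗ₖ pauliJ t + pauliJ s ⊗ₖ bL t) * ((pauliJ s' ⊗ₖ pauliJ t')ᴴ))
          (P s t * (P s' t')ᴴ) := by
    rw [hΩH, Finset.sum_mul_sum]
    refine Finset.sum_congr rfl fun s _ => Finset.sum_congr rfl fun s' _ => ?_
    rw [Finset.sum_mul_sum]
    refine Finset.sum_congr rfl fun t _ => Finset.sum_congr rfl fun t' _ => ?_
    rw [htensL_mul]
  have hΩX : Ω * (∑ s : Fin 4, ∑ t : Fin 4,
        htensL (bL s ⊗ₖ pauliJ t + pauliJ s ⊗ₖ bL t) (P s t))ᴴ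
      = ∑ s : Fin 4, ∑ s' : Fin 4, ∑ t : Fin 4, ∑ t' : Fin 4,
        htensL ((pauliJ s ⊗ₖ pauliJ t) * ((bL s' ⊗ₖ pauliJ t' + pauliJ s' ⊗ₖ bL t')ᴴ))
          (P s t * (P s' t')ᴴ) := by
    rw [hSH]
    conv_lhs => rw [hexpL]
    rw [Finset.sum_mul_sum]
    refine Finset.sum_congr rfl fun s _ => Finset.sum_congr rfl fun s' _ => ?_
    rw [Finset.sum_mul_sum]
    refine Finset.sum_congr rfl fun t _ => Finset.sum_congr rfl fun t' _ => ?_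
    rw [htensL_mul]
  rw [hR, hXΩ, hΩX]
  simp only [hDissip_sum, ← Finset.sum_add_distrib]
  refine Finset.sum_congr rfl fun s _ => Finset.sum_congr rfl fun s' _ =>
    Finset.sum_congr rfl fun t _ => Finset.sum_congr rfl fun t' _ => ?_
  rw [hDissip_htensL, hDissip_htensL, ← htensL_add_left, ← htensL_add_left]
  by_cases hbad : s = 2 ∨ s = 3 ∨ t = 2 ∨ t = 3
  · rw [hP s t hbad, Matrix.zero_mul, htensL_zero_right, htensL_zero_right]
  · by_cases hbad' : s' = 2 ∨ s' = 3 ∨ t' = 2 ∨ t' = 3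
    · rw [hP s' t' hbad', Matrix.conjTranspose_zero, Matrix.mul_zero,
        htensL_zero_right, htensL_zero_right]
    · push_neg at hbad hbad'
      obtain ⟨a1, a2, a3, a4⟩ := hbad
      obtain ⟨b1, b2, b3, b4⟩ := hbad'
      exact congrArg (fun M : M4 => htensL M (P s t * (P s' t')ᴴ))
        (keyMatL s t s' t' (fin4_01 a1 a2) (fin4_01 a3 a4)
          (fin4_01 b1 b2) (fin4_01 b3 b4))

lemma keyR {m : ℕ} (Ω : HChainOp (m+1)) (Q : Fin 4 → Fin 4 → HChainOp m)
    (hQ : ∀ s t : Fin 4, (s = 1 ∨ s = 3 ∨ t = 1 ∨ t = 3) → Q s t = 0)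
    (hexpR : Ω = ∑ s : Fin 4, ∑ t : Fin 4, htensR (Q s t) (pauliJ s ⊗ₖ pauliJ t)) :
    hDissip (htensR 1 (σm ⊗ₖ (1:M2))) (Ω * Ωᴴ) + hDissip (htensR 1 ((1:M2) ⊗ₖ σm)) (Ω * Ωᴴ)
      = (∑ s : Fin 4, ∑ t : Fin 4, htensR (Q s t) (bR s ⊗ₖ pauliJ t + pauliJ s ⊗ₖ bR t)) * Ωᴴ
        + Ω * (∑ s : Fin 4, ∑ t : Fin 4,
            htensR (Q s t) (bR s ⊗ₖ pauliJ t + pauliJ s ⊗ₖ bR t))ᴴ := by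
  have hΩH : Ωᴴ = ∑ s : Fin 4, ∑ t : Fin 4,
      htensR ((Q s t)ᴴ) ((pauliJ s ⊗ₖ pauliJ t)ᴴ) := by
    rw [hexpR]
    simp only [Matrix.conjTranspose_sum, htensR_conjT]
  have hSH : (∑ s : Fin 4, ∑ t : Fin 4,
        htensR (Q s t) (bR s ⊗ₖ pauliJ t + pauliJ s ⊗ₖ bR t))ᴴ
      = ∑ s : Fin 4, ∑ t : Fin 4,
        htensR ((Q s t)ᴴ) ((bR s ⊗ₖ pauliJ t + pauliJ s ⊗ₖ bR t)ᴴ) := by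
    simp only [Matrix.conjTranspose_sum, htensR_conjT]
  have hR : Ω * Ωᴴ = ∑ s : Fin 4, ∑ s' : Fin 4, ∑ t : Fin 4, ∑ t' : Fin 4,
      htensR (Q s t * (Q s' t')ᴴ)
        ((pauliJ s ⊗ₖ pauliJ t) * ((pauliJ s' ⊗ₖ pauliJ t')ᴴ)) := by
    rw [hΩH]
    conv_lhs => rw [hexpR]
    rw [Finset.sum_mul_sum]
    refine Finset.sum_congr rfl fun s _ => Finset.sum_congr rfl fun s' _ => ?_
    rw [Finset.sum_mul_sum]
    refine Finset.sum_congr rfl fun t _ => Finset.sum_congr rfl fun t' _ => ?_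
    rw [htensR_mul]
  have hXΩ : (∑ s : Fin 4, ∑ t : Fin 4,
        htensR (Q s t) (bR s ⊗ₖ pauliJ t + pauliJ s ⊗ₖ bR t)) * Ωᴴ
      = ∑ s : Fin 4, ∑ s' : Fin 4, ∑ t : Fin 4, ∑ t' : Fin 4,
        htensR (Q s t * (Q s' t')ᴴ)
          ((bR s ⊗ₖ pauliJ t + pauliJ s ⊗ₖ bR t) * ((pauliJ s' ⊗ₖ pauliJ t')ᴴ)) := by
    rw [hΩH, Finset.sum_mul_sum]
    refine Finset.sum_congr rfl fun s _ => Finset.sum_congr rfl fun s' _ => ?_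
    rw [Finset.sum_mul_sum]
    refine Finset.sum_congr rfl fun t _ => Finset.sum_congr rfl fun t' _ => ?_
    rw [htensR_mul]
  have hΩX : Ω * (∑ s : Fin 4, ∑ t : Fin 4,
        htensR (Q s t) (bR s ⊗ₖ pauliJ t + pauliJ s ⊗ₖ bR t))ᴴ
      = ∑ s : Fin 4, ∑ s' : Fin 4, ∑ t : Fin 4, ∑ t' : Fin 4,
        htensR (Q s t * (Q s' t')ᴴ)
          ((pauliJ s ⊗ₖ pauliJ t) * ((bR s' ⊗ₖ pauliJ t' + pauliJ s' ⊗ₖ bR t')ᴴ)) := by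
    rw [hSH]
    conv_lhs => rw [hexpR]
    rw [Finset.sum_mul_sum]
    refine Finset.sum_congr rfl fun s _ => Finset.sum_congr rfl fun s' _ => ?_
    rw [Finset.sum_mul_sum]
    refine Finset.sum_congr rfl fun t _ => Finset.sum_congr rfl fun t' _ => ?_
    rw [htensR_mul]
  rw [hR, hXΩ, hΩX]
  simp only [hDissip_sum, ← Finset.sum_add_distrib]
  refine Finset.sum_congr rfl fun s _ => Finset.sum_congr rfl fun s' _ =>
    Finset.sum_congr rfl fun t _ => Finset.sum_congr rfl fun t' _ => ?_
  rw [hDissip_htensR, hDissip_htensR, ← htensR_add_right, ← htensR_add_right]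
  by_cases hbad : s = 1 ∨ s = 3 ∨ t = 1 ∨ t = 3
  · rw [hQ s t hbad, Matrix.zero_mul, htensR_zero_left, htensR_zero_left]
  · by_cases hbad' : s' = 1 ∨ s' = 3 ∨ t' = 1 ∨ t' = 3
    · rw [hQ s' t' hbad', Matrix.conjTranspose_zero, Matrix.mul_zero,
        htensR_zero_left, htensR_zero_left]
    · push_neg at hbad hbad'
      obtain ⟨a1, a2, a3, a4⟩ := hbad
      obtain ⟨b1, b2, b3, b4⟩ := hbad'
      exact congrArg (fun M : M4 => htensR (Q s t * (Q s' t')ᴴ) M)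
        (keyMatR s t s' t' (fin4_02 a1 a2) (fin4_02 a3 a4)
          (fin4_02 b1 b2) (fin4_02 b3 b4))

end Aux3
/-- if `Ω_n` satisfies the Hubbard bulk defining relation plus the
boundary (upper-triangularity) conditions, then `R = Ω_n Ω_n†` is a fixed point of the
symmetrically boundary driven Hubbard Lindbladian. -/
theorem stmt16 (m : ℕ) (hm : 1 ≤ m) (u ε : ℝ)
    (Ω : HChainOp (m+1)) (P Q : Fin 4 → Fin 4 → HChainOp m)
    (hP : ∀ s t : Fin 4, (s = 2 ∨ s = 3 ∨ t = 2 ∨ t = 3) → P s t = 0)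
    (hQ : ∀ s t : Fin 4, (s = 1 ∨ s = 3 ∨ t = 1 ∨ t = 3) → Q s t = 0)
    (hexpL : Ω = ∑ s : Fin 4, ∑ t : Fin 4, htensL (pauliJ s ⊗ₖ pauliJ t) (P s t))
    (hexpR : Ω = ∑ s : Fin 4, ∑ t : Fin 4, htensR (Q s t) (pauliJ s ⊗ₖ pauliJ t))
    (hbulk : Hubbard (u:ℂ) (m+1) * Ω - Ω * Hubbard (u:ℂ) (m+1)
      = (-(Complex.I) * (ε:ℂ)) •
          (htensL (σz ⊗ₖ σ0) (P 0 0) + htensL (σ0 ⊗ₖ σz) (P 0 0)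
            - htensR (Q 0 0) (σz ⊗ₖ σ0) - htensR (Q 0 0) (σ0 ⊗ₖ σz)
            + htensL (σz ⊗ₖ σp) (P 0 1) + htensL (σp ⊗ₖ σz) (P 1 0)
            - htensR (Q 0 2) (σz ⊗ₖ σm) - htensR (Q 2 0) (σm ⊗ₖ σz))) :
    (-(Complex.I)) • (Hubbard (u:ℂ) (m+1) * (Ω * Ωᴴ) - (Ω * Ωᴴ) * Hubbard (u:ℂ) (m+1))
      + (ε:ℂ) •
        (hDissip (hsiteσ (0 : Fin (m+1)) σp) (Ω * Ωᴴ)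
          + hDissip (hsiteτ (0 : Fin (m+1)) σp) (Ω * Ωᴴ)
          + hDissip (hsiteσ (Fin.last m) σm) (Ω * Ωᴴ)
          + hDissip (hsiteτ (Fin.last m) σm) (Ω * Ωᴴ)) = 0 := by
  have hH : (Hubbard (u:ℂ) (m+1))ᴴ = Hubbard (u:ℂ) (m+1) := hubbard_conjT _ u
  -- the commutator identity
  have e1 : Hubbard (u:ℂ) (m+1) * (Ω * Ωᴴ) - (Ω * Ωᴴ) * Hubbard (u:ℂ) (m+1)
      = (Hubbard (u:ℂ) (m+1) * Ω - Ω * Hubbard (u:ℂ) (m+1)) * Ωᴴ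
        - Ω * (Hubbard (u:ℂ) (m+1) * Ω - Ω * Hubbard (u:ℂ) (m+1))ᴴ := by
    rw [Matrix.conjTranspose_sub, Matrix.conjTranspose_mul, Matrix.conjTranspose_mul, hH]
    noncomm_ring
  have hL := keyL Ω P hP hexpL
  have hRk := keyR Ω Q hQ hexpR
  -- evaluate the boundary coefficient sums
  have hP2 : ∀ t, P 2 t = 0 := fun t => hP 2 t (Or.inl rfl)
  have hP3 : ∀ t, P 3 t = 0 := fun t => hP 3 t (Or.inr (Or.inl rfl))
  have hPk2 : ∀ s, P s 2 = 0 := fun s => hP s 2 (Or.inr (Or.inr (Or.inl rfl)))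
  have hPk3 : ∀ s, P s 3 = 0 := fun s => hP s 3 (Or.inr (Or.inr (Or.inr rfl)))
  have hQ1 : ∀ t, Q 1 t = 0 := fun t => hQ 1 t (Or.inl rfl)
  have hQ3 : ∀ t, Q 3 t = 0 := fun t => hQ 3 t (Or.inr (Or.inl rfl))
  have hQk1 : ∀ s, Q s 1 = 0 := fun s => hQ s 1 (Or.inr (Or.inr (Or.inl rfl)))
  have hQk3 : ∀ s, Q s 3 = 0 := fun s => hQ s 3 (Or.inr (Or.inr (Or.inr rfl)))
  have hSL : (∑ s : Fin 4, ∑ t : Fin 4,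
        htensL (bL s ⊗ₖ pauliJ t + pauliJ s ⊗ₖ bL t) (P s t))
      = htensL (σz ⊗ₖ σ0) (P 0 0) + htensL (σ0 ⊗ₖ σz) (P 0 0)
        + htensL (σz ⊗ₖ σp) (P 0 1) + htensL (σp ⊗ₖ σz) (P 1 0) := by
    rw [Fin.sum_univ_four]
    rw [Fin.sum_univ_four, Fin.sum_univ_four, Fin.sum_univ_four, Fin.sum_univ_four]
    simp only [hP2, hP3, hPk2, hPk3, htensL_zero_right, add_zero, zero_add]
    simp only [bL, pauliJ, Matrix.cons_val_zero, Matrix.cons_val_one, Matrix.head_cons,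
      Matrix.zero_kronecker, Matrix.kronecker_zero, add_zero, zero_add,
      htensL_zero_left, htensL_add_left]
    try abel
  have hSR : (∑ s : Fin 4, ∑ t : Fin 4,
        htensR (Q s t) (bR s ⊗ₖ pauliJ t + pauliJ s ⊗ₖ bR t))
      = -(htensR (Q 0 0) (σz ⊗ₖ σ0)) - htensR (Q 0 0) (σ0 ⊗ₖ σz)
        - htensR (Q 0 2) (σz ⊗ₖ σm) - htensR (Q 2 0) (σm ⊗ₖ σz) := by
    rw [Fin.sum_univ_four]
    rw [Fin.sum_univ_four, Fin.sum_univ_four, Fin.sum_univ_four, Fin.sum_univ_four]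
    simp only [hQ1, hQ3, hQk1, hQk3, htensR_zero_left, add_zero, zero_add]
    simp only [bR, pauliJ, Matrix.cons_val_zero, Matrix.cons_val_one, Matrix.head_cons,
      Matrix.cons_val_two, Matrix.tail_cons,
      Matrix.zero_kronecker, Matrix.kronecker_zero, add_zero, zero_add,
      neg_kron, kron_neg, htensR_zero_right, htensR_add_right, htensR_neg_right]
    try abel
  -- rewrite the jump operators as tensor products
  rw [hsiteσ_zero_eq_htensL, hsiteτ_zero_eq_htensL, hsiteσ_last_eq_htensR,
    hsiteτ_last_eq_htensR]
  rw [e1, hbulk]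
  -- name the two coefficient sums
  set SL := ∑ s : Fin 4, ∑ t : Fin 4,
      htensL (bL s ⊗ₖ pauliJ t + pauliJ s ⊗ₖ bL t) (P s t) with hSLdef
  set SR := ∑ s : Fin 4, ∑ t : Fin 4,
      htensR (Q s t) (bR s ⊗ₖ pauliJ t + pauliJ s ⊗ₖ bR t) with hSRdef
  rw [hL]
  rw [add_assoc (SL * Ωᴴ + Ω * SLᴴ)]
  rw [hRk]
  have hX : (htensL (σz ⊗ₖ σ0) (P 0 0) + htensL (σ0 ⊗ₖ σz) (P 0 0)
        - htensR (Q 0 0) (σz ⊗ₖ σ0) - htensR (Q 0 0) (σ0 ⊗ₖ σz)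
        + htensL (σz ⊗ₖ σp) (P 0 1) + htensL (σp ⊗ₖ σz) (P 1 0)
        - htensR (Q 0 2) (σz ⊗ₖ σm) - htensR (Q 2 0) (σm ⊗ₖ σz)) = SL + SR := by
    rw [hSL, hSR]
    abel
  rw [hX]
  have hDi : (SL * Ωᴴ + Ω * SLᴴ) + (SR * Ωᴴ + Ω * SRᴴ)
      = (SL + SR) * Ωᴴ + Ω * (SL + SR)ᴴ := by
    rw [Matrix.add_mul, Matrix.conjTranspose_add, Matrix.mul_add]
    abel
  rw [hDi]
  -- scalar algebra
  rw [Matrix.smul_mul, Matrix.conjTranspose_smul, Matrix.mul_smul]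
  have hstar : star (-(Complex.I) * (ε:ℂ)) = Complex.I * (ε:ℂ) := by
    simp [Complex.star_def, _root_.map_mul, Complex.conj_ofReal]
  rw [hstar]
  rw [smul_sub, smul_smul, smul_smul]
  have c1 : (-(Complex.I)) * (-(Complex.I) * (ε:ℂ)) = -(ε:ℂ) := by
    rw [show (-(Complex.I)) * (-(Complex.I) * (ε:ℂ)) = Complex.I * Complex.I * ε by ring,
      Complex.I_mul_I]
    ring
  have c2 : (-(Complex.I)) * (Complex.I * (ε:ℂ)) = (ε:ℂ) := by
    rw [show (-(Complex.I)) * (Complex.I * (ε:ℂ)) = -(Complex.I * Complex.I) * ε by ring,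
      Complex.I_mul_I]
    ring
  rw [c1, c2, smul_add, neg_smul]
  abel

end
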